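/- Let f, f†, f‡ be probability density functions on ℝ with f(y) = q·f†(y) + (1−q)·f‡(y) for some q ∈ (0,1), and let y_{1−q} satisfy ∫_{y_{1−q}}^{∞} f(y) dy = 1−q. Then (1/(1−q))·∫_{y_{1−q}}^{∞} y·f(y) dy ≥ ∫ y·f‡(y) dy. -/
import Mathlib


open MeasureTheory Set

/-- Upper-trimming half of Lee's (2002) trimming lemma. -/
theorem lee_trimming_upper
    (f fdag fddag : ℝ → ℝ) (q y1q : ℝ)
    (hq : q ∈ Set.Ioo (0:ℝ) 1)
    (hf_nonneg : ∀ y, 0 ≤ f y) (hfdag_nonneg : ∀ y, 0 ≤ fdag y)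
    (hfddag_nonneg : ∀ y, 0 ≤ fddag y)
    (hf_int : Integrable f) (hfdag_int : Integrable fdag) (hfddag_int : Integrable fddag)
    (hf_mass : ∫ y, f y = 1) (hfdag_mass : ∫ y, fdag y = 1)
    (hfddag_mass : ∫ y, fddag y = 1)
    (hf_mom : Integrable (fun y => y * f y))
    (hfdag_mom : Integrable (fun y => y * fdag y))
    (hfddag_mom : Integrable (fun y => y * fddag y))
    (hmix : ∀ y, f y = q * fdag y + (1 - q) * fddag y)
    (hquant : ∫ y in Set.Ici y1q, f y = 1 - q) :
    (1 / (1 - q)) * ∫ y in Set.Ici y1q, y * f y ≥ ∫ y, y * fddag y := by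
  obtain ⟨hq0, hq1⟩ := hq
  have h1q : (0:ℝ) < 1 - q := by linarith
  have hA : MeasurableSet (Set.Ici y1q) := measurableSet_Ici
  set g : ℝ → ℝ := fun y => (Set.Ici y1q).indicator f y - (1 - q) * fddag y with hg
  have hind_int : Integrable ((Set.Ici y1q).indicator f) := hf_int.indicator hA
  have hind_mom : Integrable ((Set.Ici y1q).indicator (fun y => y * f y)) :=
    hf_mom.indicator hA
  have hg_int : Integrable g := hind_int.sub (hfddag_int.const_mul _)
  have heq : (fun y => y * g y)
      = fun y => (Set.Ici y1q).indicator (fun y => y * f y) y - (1 - q) * (y * fddag y) := by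
    funext y
    by_cases hy : y ∈ Set.Ici y1q <;>
      simp [hg, Set.indicator_of_mem, Set.indicator_of_notMem, hy] <;> ring
  have hyg_int : Integrable (fun y => y * g y) := by
    rw [heq]; exact hind_mom.sub (hfddag_mom.const_mul _)
  have hg0 : ∫ y, g y = 0 := by
    rw [hg]
    rw [integral_sub hind_int (hfddag_int.const_mul _), integral_indicator hA, hquant,
      integral_const_mul, hfddag_mass]
    ring
  have hpt : ∀ y, y1q * g y ≤ y * g y := by
    intro y
    by_cases hy : y1q ≤ y
    · have hmem : y ∈ Set.Ici y1q := hy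
      have hpos : 0 ≤ g y := by
        simp only [hg, Set.indicator_of_mem hmem]
        have := hmix y
        nlinarith [hfdag_nonneg y]
      exact mul_le_mul_of_nonneg_right hy hpos
    · push_neg at hy
      have hmem : y ∉ Set.Ici y1q := not_le.mpr hy
      have hneg : g y ≤ 0 := by
        simp only [hg, Set.indicator_of_notMem hmem]
        nlinarith [hfddag_nonneg y]
      exact mul_le_mul_of_nonpos_right hy.le hneg
  have hmono : ∫ y, y1q * g y ≤ ∫ y, y * g y :=
    integral_mono (hg_int.const_mul _) hyg_int hpt
  have hlhs : ∫ y, y1q * g y = 0 := by rw [integral_const_mul, hg0, mul_zero]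
  have hrhs : ∫ y, y * g y
      = (∫ y in Set.Ici y1q, y * f y) - (1 - q) * ∫ y, y * fddag y := by
    rw [heq, integral_sub hind_mom (hfddag_mom.const_mul _), integral_indicator hA,
      integral_const_mul]
  have key : (1 - q) * (∫ y, y * fddag y) ≤ ∫ y in Set.Ici y1q, y * f y := by
    rw [hlhs, hrhs] at hmono; linarith
  rw [ge_iff_le, show (1 / (1 - q)) * ∫ y in Set.Ici y1q, y * f y
      = (∫ y in Set.Ici y1q, y * f y) / (1 - q) by ring, le_div_iff₀ h1q]
  linarith
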